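/- Let M be a matroid of rank k on {1,...,n}. If v = (e_{I₁}, k−rk(I₁)) and w = (e_{I₂}, k−rk(I₂)) are adjacent vertices of the lifted independence polytope ~P_I(M) ⊆ ℝ^{n+1}, then v − w is parallel to a vector of the form e_i − e_j (with i, j ∈ {1,...,n+1}); that is, ~P_I(M) is a generalized permutohedron. -/

import Mathlib

noncomputable section

open Finset

/-- The weight of a linearly ordered block (given as a list): the number of its
elements smaller than its first element. -/
def blockWeight (b : List ℕ) : ℕ := (b.filter (fun x => x < b.headI)).length

/-- `P` is a partition of `{1,…,n}` into linearly ordered blocks (nonempty lists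
of distinct elements, pairwise disjoint, whose union is `{1,…,n}`). -/
def IsOrderedPartition (n : ℕ) (P : Finset (List ℕ)) : Prop :=
  (∀ b ∈ P, b ≠ [] ∧ b.Nodup) ∧
  (∀ b₁ ∈ P, ∀ b₂ ∈ P, b₁ ≠ b₂ → ∀ x, x ∈ b₁ → x ∉ b₂) ∧
  (∀ x : ℕ, (∃ b ∈ P, x ∈ b) ↔ x ∈ Finset.Icc 1 n)

/-- The weight of an ordered partition: the sum of the weights of its blocks. -/
def partitionWeight (P : Finset (List ℕ)) : ℕ := ∑ b ∈ P, blockWeight b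

/-- The weighted Lah number `W(ℓ,n,m)`: the number of partitions of `{1,…,n}`
into exactly `m` linearly ordered blocks with total weight `ℓ`.
(It vanishes for `ℓ < 0`.) -/
def weightedLah (ℓ : ℤ) (n m : ℕ) : ℕ :=
  Set.ncard {P : Finset (List ℕ) |
    IsOrderedPartition n P ∧ P.card = m ∧ (partitionWeight P : ℤ) = ℓ}

/-- The number of cycles of a permutation of `Fin n` (fixed points count as cycles). -/
def numCycles {n : ℕ} (σ : Equiv.Perm (Fin n)) : ℕ :=
  Multiset.card σ.cycleType + (n - σ.cycleType.sum)

/-- The unsigned Stirling number of the first kind: the number of permutations of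
`n` elements with exactly `m` cycles. -/
def stirlingFirst (n m : ℕ) : ℕ :=
  Nat.card {σ : Equiv.Perm (Fin n) // numCycles σ = m}

/-- The number of descents of a permutation of `Fin m`. -/
def descentCount (m : ℕ) (σ : Equiv.Perm (Fin m)) : ℕ :=
  ((Finset.range (m - 1)).filter (fun i =>
    ((List.ofFn (fun j => (σ j : ℕ))).getD (i + 1) 0) <
      ((List.ofFn (fun j => (σ j : ℕ))).getD i 0))).card

/-- The Eulerian number `A(m,j)`: permutations of `{1,…,m}` with exactly `j` descents. -/
def eulerian (m j : ℕ) : ℕ :=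
  Nat.card {σ : Equiv.Perm (Fin m) // descentCount m σ = j}

/-- The coefficient `e_{k,n,m}` of the Ehrhart polynomial of the hypersimplex. -/
def eCoef (k n m : ℕ) : ℚ :=
  (1 / (n - 1).factorial : ℚ) *
    ∑ ℓ ∈ Finset.range k, (weightedLah ℓ n (m + 1) : ℚ) * (eulerian m (k - ℓ - 1) : ℚ)

/-- Number of lattice points of the `t`-th dilate of the hypersimplex `Δ_{k,n}`,
i.e. points of `{0,…,t}^n` with coordinate sum `k·t`. -/
def hyperCount (k n t : ℕ) : ℕ :=
  Nat.card {x : Fin n → ℤ // (∀ i, 0 ≤ x i ∧ x i ≤ (t : ℤ)) ∧ ∑ i, x i = (k : ℤ) * t}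

/-- Number of lattice points of the `t`-th dilate of the half-open hypersimplex
`Δ'_{k,n} ⊆ ℝ^{n-1}` (for `k > 1`). -/
def halfOpenCount (k n t : ℕ) : ℕ :=
  Nat.card {x : Fin (n - 1) → ℤ // (∀ i, 0 ≤ x i ∧ x i ≤ (t : ℤ)) ∧
    ((k : ℤ) - 1) * t < ∑ i, x i ∧ ∑ i, x i ≤ (k : ℤ) * t}

/-- Number of lattice points of the `t`-th dilate of the independence polytope of
`U_{k,n}`, i.e. points of `{0,…,t}^n` with coordinate sum at most `k·t`. -/
def indepCount (k n t : ℕ) : ℕ :=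
  Nat.card {x : Fin n → ℤ // (∀ i, 0 ≤ x i ∧ x i ≤ (t : ℤ)) ∧ ∑ i, x i ≤ (k : ℤ) * t}

/-- Number of lattice points of a region `S ⊆ ℝ^d`. -/
def latticeCount {d : ℕ} (S : Set (Fin d → ℝ)) : ℕ :=
  Nat.card {x : Fin d → ℤ // (fun i => (x i : ℝ)) ∈ S}

/-- The 0/1 indicator vector of a subset `I` of `{1,…,n}`. -/
def indicator {n : ℕ} (I : Finset (Fin n)) : Fin n → ℝ := fun i => if i ∈ I then 1 else 0

/-- The independence polytope of a matroid `M`. -/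
def indepPolytope {n : ℕ} (M : Matroid (Fin n)) : Set (Fin n → ℝ) :=
  convexHull ℝ {x | ∃ I : Finset (Fin n), M.Indep ↑I ∧ x = indicator I}

/-- The lifted independence polytope of a matroid `M` of rank `k`. -/
def liftedIndepPolytope {n : ℕ} (M : Matroid (Fin n)) (k : ℕ) : Set (Fin (n + 1) → ℝ) :=
  convexHull ℝ
    {y | ∃ I : Finset (Fin n), M.Indep ↑I ∧ y = Fin.snoc (indicator I) ((k : ℝ) - I.card)}



/-- The lifted vertex of an independent set. -/
def pt (k : ℕ) {n : ℕ} (I : Finset (Fin n)) : Fin (n + 1) → ℝ :=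
  Fin.snoc (indicator I) ((k : ℝ) - I.card)

lemma pt_castSucc (k : ℕ) {n : ℕ} (I : Finset (Fin n)) (i : Fin n) :
    pt k I i.castSucc = if i ∈ I then 1 else 0 := by
  simp [pt, indicator]

lemma pt_last (k : ℕ) {n : ℕ} (I : Finset (Fin n)) :
    pt k I (Fin.last n) = (k : ℝ) - I.card := by
  simp [pt]

lemma pt_inj {k n : ℕ} {I J : Finset (Fin n)} (h : pt k I = pt k J) : I = J := by
  ext i
  have h2 := congrFun h i.castSucc
  rw [pt_castSucc, pt_castSucc] at h2
  by_cases hI : i ∈ I <;> by_cases hJ : i ∈ J <;> simp_all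

lemma pt_insert {k n : ℕ} {I : Finset (Fin n)} {a : Fin n} (ha : a ∉ I) :
    pt k (insert a I) =
      pt k I + (Pi.single a.castSucc (1 : ℝ) - Pi.single (Fin.last n) 1) := by
  funext j
  induction j using Fin.lastCases with
  | last =>
    have hne : (Fin.last n) ≠ a.castSucc := (Fin.castSucc_lt_last a).ne'
    simp only [pt_last, Finset.card_insert_of_notMem ha, Pi.add_apply, Pi.sub_apply,
      Pi.single_apply, if_neg hne, if_pos rfl]
    push_cast
    ring
  | cast i =>
    have h1 : (i.castSucc : Fin (n + 1)) ≠ Fin.last n := (Fin.castSucc_lt_last i).ne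
    simp only [pt_castSucc, Pi.add_apply, Pi.sub_apply, Pi.single_apply, Finset.mem_insert,
      if_neg h1, Fin.castSucc_inj]
    rcases eq_or_ne i a with rfl | hia
    · simp [ha]
    · simp [hia]


theorem lifted_indep_generalized_permutohedron (n k : ℕ) (M : Matroid (Fin n))
    (hE : M.E = Set.univ) (hrk : ∀ B, M.IsBase B → B.ncard = k)
    (v w : Fin (n + 1) → ℝ)
    (hv : ∃ I₁ : Finset (Fin n), M.Indep ↑I₁ ∧
      v = Fin.snoc (indicator I₁) ((k : ℝ) - I₁.card))
    (hw : ∃ I₂ : Finset (Fin n), M.Indep ↑I₂ ∧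
      w = Fin.snoc (indicator I₂) ((k : ℝ) - I₂.card))
    (hvw : v ≠ w)
    (hedge : IsExposed ℝ (liftedIndepPolytope M k) (segment ℝ v w)) :
    ∃ (i j : Fin (n + 1)) (c : ℝ), i ≠ j ∧
      v - w = c • (Pi.single i (1 : ℝ) - Pi.single j (1 : ℝ)) := by
  classical
  obtain ⟨I₁, hI₁, hveq⟩ := hv
  obtain ⟨I₂, hI₂, hweq⟩ := hw
  have hveq : v = pt k I₁ := hveq
  have hweq : w = pt k I₂ := hweq
  have hne : I₁ ≠ I₂ := fun h => hvw (by rw [hveq, hweq, h])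
  have hmem : ∀ J : Finset (Fin n), M.Indep ↑J → pt k J ∈ liftedIndepPolytope M k :=
    fun J hJ => subset_convexHull ℝ _ ⟨J, hJ, rfl⟩
  obtain ⟨f, hf⟩ := hedge ⟨v, left_mem_segment ℝ v w⟩
  have hvmem : v ∈ segment ℝ v w := left_mem_segment ℝ v w
  have hwmem : w ∈ segment ℝ v w := right_mem_segment ℝ v w
  rw [hf] at hvmem hwmem
  set μ := f v with hμ
  have hmax : ∀ J : Finset (Fin n), M.Indep ↑J → f (pt k J) ≤ μ :=
    fun J hJ => hvmem.2 _ (hmem J hJ)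
  have hfw : f w = μ := le_antisymm (hvmem.2 _ hwmem.1) (hwmem.2 _ hvmem.1)
  have hfv1 : f (pt k I₁) = μ := by rw [← hveq]
  have hfv2 : f (pt k I₂) = μ := by rw [← hweq, hfw]
  -- uniqueness: only I₁ and I₂ achieve the maximum
  have huniq : ∀ J : Finset (Fin n), M.Indep ↑J → f (pt k J) = μ → J = I₁ ∨ J = I₂ := by
    intro J hJ hfJ
    have hseg : pt k J ∈ segment ℝ v w := by
      rw [hf]
      exact ⟨hmem J hJ, fun y hy => hfJ ▸ hvmem.2 y hy⟩
    obtain ⟨a, b, ha, hb, hab, hx⟩ := hseg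
    obtain ⟨i, hi⟩ : ∃ i, ¬ (i ∈ I₁ ↔ i ∈ I₂) := by
      by_contra h
      push_neg at h
      exact hne (Finset.ext h)
    have key : a * (pt k I₁ i.castSucc) + b * (pt k I₂ i.castSucc) = pt k J i.castSucc := by
      have h3 := congrFun hx i.castSucc
      simpa [hveq, hweq] using h3
    have hA : a = 0 ∨ a = 1 := by
      by_cases hi1 : i ∈ I₁ <;> by_cases hi2 : i ∈ I₂
      · exact absurd (iff_of_true hi1 hi2) hi
      · by_cases hiJ : i ∈ J
        · right; simpa [pt_castSucc, hi1, hi2, hiJ] using key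
        · left; simpa [pt_castSucc, hi1, hi2, hiJ] using key
      · by_cases hiJ : i ∈ J
        · left
          have hb1 : b = 1 := by simpa [pt_castSucc, hi1, hi2, hiJ] using key
          linarith
        · right
          have hb0 : b = 0 := by simpa [pt_castSucc, hi1, hi2, hiJ] using key
          linarith
      · exact absurd (iff_of_false hi1 hi2) hi
    rcases hA with rfl | rfl
    · right
      have hb1 : b = 1 := by linarith
      have hJw : pt k J = w := by rw [← hx, hb1]; simp
      exact pt_inj (hJw.trans hweq)
    · left
      have hb0 : b = 0 := by linarith
      have hJv : pt k J = v := by rw [← hx, hb0]; simp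
      exact pt_inj (hJv.trans hveq)
  -- the linear functional on coordinates
  set g : Fin n → ℝ :=
    fun a => f (Pi.single a.castSucc 1) - f (Pi.single (Fin.last n) 1) with hg
  have hins : ∀ (J : Finset (Fin n)) (a : Fin n), a ∉ J →
      f (pt k (insert a J)) = f (pt k J) + g a := by
    intro J a ha
    rw [pt_insert ha, map_add, map_sub, hg]
  -- deletion lemma
  have hdel : ∀ (J : Finset (Fin n)) (a : Fin n), a ∈ J →
      f (pt k J) = f (pt k (J.erase a)) + g a := by
    intro J a ha
    have := hins (J.erase a) a (Finset.notMem_erase a J)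
    rwa [Finset.insert_erase ha] at this
  have hindepErase : ∀ (J : Finset (Fin n)), M.Indep ↑J → ∀ a, M.Indep ↑(J.erase a) :=
    fun J hJ a => hJ.subset (Finset.coe_subset.mpr (Finset.erase_subset a J))
  -- L1 : coordinates in I₁ \ I₂ have nonnegative weight
  have L1 : ∀ a ∈ I₁, a ∉ I₂ → 0 ≤ g a ∧ (g a = 0 → I₁.erase a = I₂) := by
    intro a ha1 ha2
    have h1 := hdel I₁ a ha1
    have h2 := hmax _ (hindepErase I₁ hI₁ a)
    constructor
    · linarith [hfv1]
    · intro hg0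
      have h3 : f (pt k (I₁.erase a)) = μ := by rw [hg0] at h1; linarith [hfv1]
      rcases huniq _ (hindepErase I₁ hI₁ a) h3 with h4 | h4
      · exact absurd (h4 ▸ Finset.notMem_erase a I₁) (by simp [ha1])
      · exact h4
  have L1' : ∀ b ∈ I₂, b ∉ I₁ → 0 ≤ g b ∧ (g b = 0 → I₂.erase b = I₁) := by
    intro b hb2 hb1
    have h1 := hdel I₂ b hb2
    have h2 := hmax _ (hindepErase I₂ hI₂ b)
    constructor
    · linarith [hfv2]
    · intro hg0
      have h3 : f (pt k (I₂.erase b)) = μ := by rw [hg0] at h1; linarith [hfv2]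
      rcases huniq _ (hindepErase I₂ hI₂ b) h3 with h4 | h4
      · exact h4
      · exact absurd (h4 ▸ Finset.notMem_erase b I₂) (by simp [hb2])
  by_cases hsub : I₂ ⊆ I₁
  · -- case A : I₂ ⊂ I₁, show I₁ = insert a I₂
    have hnsub : ¬ I₁ ⊆ I₂ := fun h => hne (Finset.Subset.antisymm h hsub)
    obtain ⟨a, ha1, ha2⟩ := Finset.not_subset.mp hnsub
    have hinsSub : insert a I₂ ⊆ I₁ := Finset.insert_subset ha1 hsub
    have hindepIns : M.Indep ↑(insert a I₂) := hI₁.subset (Finset.coe_subset.mpr hinsSub)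
    have h1 : f (pt k (insert a I₂)) = μ + g a := by rw [hins I₂ a ha2, hfv2]
    have hle : g a ≤ 0 := by linarith [hmax _ hindepIns]
    have hga : g a = 0 := le_antisymm hle (L1 a ha1 ha2).1
    have hIe : I₁.erase a = I₂ := (L1 a ha1 ha2).2 hga
    have hI12 : I₁ = insert a I₂ := by rw [← hIe, Finset.insert_erase ha1]
    refine ⟨a.castSucc, Fin.last n, 1, (Fin.castSucc_lt_last a).ne, ?_⟩
    rw [one_smul, hveq, hweq, hI12, pt_insert ha2]
    abel
  by_cases hsub' : I₁ ⊆ I₂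
  · -- case B : I₁ ⊂ I₂
    obtain ⟨b, hb2, hb1⟩ := Finset.not_subset.mp hsub
    have hinsSub : insert b I₁ ⊆ I₂ := Finset.insert_subset hb2 hsub'
    have hindepIns : M.Indep ↑(insert b I₁) := hI₂.subset (Finset.coe_subset.mpr hinsSub)
    have h1 : f (pt k (insert b I₁)) = μ + g b := by rw [hins I₁ b hb1, hfv1]
    have hle : g b ≤ 0 := by linarith [hmax _ hindepIns]
    have hgb : g b = 0 := le_antisymm hle (L1' b hb2 hb1).1
    have hIe : I₂.erase b = I₁ := (L1' b hb2 hb1).2 hgb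
    have hI21 : I₂ = insert b I₁ := by rw [← hIe, Finset.insert_erase hb2]
    refine ⟨Fin.last n, b.castSucc, 1, (Fin.castSucc_lt_last b).ne', ?_⟩
    rw [one_smul, hveq, hweq, hI21, pt_insert hb1]
    abel
  -- case C : both differences nonempty
  obtain ⟨a0, ha01, ha02⟩ := Finset.not_subset.mp hsub'
  obtain ⟨b0, hb02, hb01⟩ := Finset.not_subset.mp hsub
  -- sizes must be equal
  have hcard : I₁.card = I₂.card := by
    rcases lt_trichotomy I₁.card I₂.card with hlt | h | hlt
    · exfalso
      obtain ⟨e, he, hind⟩ := hI₁.augment hI₂ (by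
        rw [Set.encard_coe_eq_coe_finsetCard, Set.encard_coe_eq_coe_finsetCard]
        exact_mod_cast hlt)
      obtain ⟨he2, he1⟩ := he
      rw [Finset.mem_coe] at he2
      rw [Finset.mem_coe] at he1
      rw [← Finset.coe_insert] at hind
      have h1 : f (pt k (insert e I₁)) = μ + g e := by rw [hins I₁ e he1, hfv1]
      have hle : g e ≤ 0 := by linarith [hmax _ hind]
      have hge := (L1' e he2 he1).1
      have hIe : I₂.erase e = I₁ := (L1' e he2 he1).2 (le_antisymm hle hge)
      exact hsub' (hIe ▸ Finset.erase_subset e I₂)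
    · exact h
    · exfalso
      obtain ⟨e, he, hind⟩ := hI₂.augment hI₁ (by
        rw [Set.encard_coe_eq_coe_finsetCard, Set.encard_coe_eq_coe_finsetCard]
        exact_mod_cast hlt)
      obtain ⟨he1, he2⟩ := he
      rw [Finset.mem_coe] at he1
      rw [Finset.mem_coe] at he2
      rw [← Finset.coe_insert] at hind
      have h1 : f (pt k (insert e I₂)) = μ + g e := by rw [hins I₂ e he2, hfv2]
      have hle : g e ≤ 0 := by linarith [hmax _ hind]
      have hge := (L1 e he1 he2).1
      have hIe : I₁.erase e = I₂ := (L1 e he1 he2).2 (le_antisymm hle hge)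
      exact hsub (hIe ▸ Finset.erase_subset e I₁)
  -- the symmetric differences have equal cardinalities
  have hΔcard : (I₁ \ I₂).card = (I₂ \ I₁).card := by
    have h1 := Finset.card_sdiff_add_card_inter I₁ I₂
    have h2 := Finset.card_sdiff_add_card_inter I₂ I₁
    rw [Finset.inter_comm] at h2
    omega
  -- exchange step
  have hstep : 2 ≤ (I₁ \ I₂).card → ∀ a ∈ I₁ \ I₂, ∃ b ∈ I₂ \ I₁, g b < g a := by
    intro h2 a haΔ
    rw [Finset.mem_sdiff] at haΔ
    obtain ⟨ha1, ha2⟩ := haΔ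
    have hJind : M.Indep ↑(I₁.erase a) := hindepErase I₁ hI₁ a
    obtain ⟨e, he, hind⟩ := hJind.augment hI₂ (by
      rw [Set.encard_coe_eq_coe_finsetCard, Set.encard_coe_eq_coe_finsetCard,
        Finset.card_erase_of_mem ha1, hcard]
      have : 1 ≤ I₂.card := hcard ▸ Finset.card_pos.mpr ⟨a, ha1⟩
      exact_mod_cast Nat.sub_lt (by omega) one_pos)
    obtain ⟨he2, heJ⟩ := he
    rw [Finset.mem_coe] at he2
    rw [Finset.mem_coe, Finset.mem_erase, not_and_or, not_not] at heJ
    have he1 : e ∉ I₁ := by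
      rcases heJ with h | h
      · exact absurd (h ▸ he2) ha2
      · exact h
    have heJ' : e ∉ I₁.erase a := fun hc => he1 (Finset.mem_of_mem_erase hc)
    rw [← Finset.coe_insert] at hind
    have hfe : f (pt k (insert e (I₁.erase a))) = μ - g a + g e := by
      rw [hins _ e heJ']
      have := hdel I₁ a ha1
      rw [hfv1] at this
      linarith
    have hle : g e ≤ g a := by linarith [hmax _ hind]
    refine ⟨e, Finset.mem_sdiff.mpr ⟨he2, he1⟩, ?_⟩
    rcases lt_or_eq_of_le hle with h | h
    · exact h
    exfalso
    have hfeq : f (pt k (insert e (I₁.erase a))) = μ := by rw [hfe, h]; ring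
    rcases huniq _ hind hfeq with h4 | h4
    · have : e ∈ I₁ := h4 ▸ Finset.mem_insert_self e _
      exact he1 this
    · have hsub2 : I₁ \ I₂ ⊆ {a} := by
        intro x hx
        rw [Finset.mem_sdiff] at hx
        rw [Finset.mem_singleton]
        by_contra hxa
        have : x ∈ insert e (I₁.erase a) :=
          Finset.mem_insert_of_mem (Finset.mem_erase.mpr ⟨hxa, hx.1⟩)
        rw [h4] at this
        exact hx.2 this
      have := Finset.card_le_card hsub2
      simp at this
      omega
  have hstep' : 2 ≤ (I₂ \ I₁).card → ∀ b ∈ I₂ \ I₁, ∃ a ∈ I₁ \ I₂, g a < g b := by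
    intro h2 b hbΔ
    rw [Finset.mem_sdiff] at hbΔ
    obtain ⟨hb2, hb1⟩ := hbΔ
    have hJind : M.Indep ↑(I₂.erase b) := hindepErase I₂ hI₂ b
    obtain ⟨e, he, hind⟩ := hJind.augment hI₁ (by
      rw [Set.encard_coe_eq_coe_finsetCard, Set.encard_coe_eq_coe_finsetCard,
        Finset.card_erase_of_mem hb2, ← hcard]
      have : 1 ≤ I₁.card := hcard.symm ▸ Finset.card_pos.mpr ⟨b, hb2⟩
      exact_mod_cast Nat.sub_lt (by omega) one_pos)
    obtain ⟨he1, heJ⟩ := he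
    rw [Finset.mem_coe] at he1
    rw [Finset.mem_coe, Finset.mem_erase, not_and_or, not_not] at heJ
    have he2 : e ∉ I₂ := by
      rcases heJ with h | h
      · exact absurd (h ▸ he1) hb1
      · exact h
    have heJ' : e ∉ I₂.erase b := fun hc => he2 (Finset.mem_of_mem_erase hc)
    rw [← Finset.coe_insert] at hind
    have hfe : f (pt k (insert e (I₂.erase b))) = μ - g b + g e := by
      rw [hins _ e heJ']
      have := hdel I₂ b hb2
      rw [hfv2] at this
      linarith
    have hle : g e ≤ g b := by linarith [hmax _ hind]
    refine ⟨e, Finset.mem_sdiff.mpr ⟨he1, he2⟩, ?_⟩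
    rcases lt_or_eq_of_le hle with h | h
    · exact h
    exfalso
    have hfeq : f (pt k (insert e (I₂.erase b))) = μ := by rw [hfe, h]; ring
    rcases huniq _ hind hfeq with h4 | h4
    · have hsub2 : I₂ \ I₁ ⊆ {b} := by
        intro x hx
        rw [Finset.mem_sdiff] at hx
        rw [Finset.mem_singleton]
        by_contra hxb
        have : x ∈ insert e (I₂.erase b) :=
          Finset.mem_insert_of_mem (Finset.mem_erase.mpr ⟨hxb, hx.1⟩)
        rw [h4] at this
        exact hx.2 this
      have := Finset.card_le_card hsub2
      simp at this
      omega
    · have : e ∈ I₂ := h4 ▸ Finset.mem_insert_self e _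
      exact he2 this
  -- the symmetric differences are singletons
  have hone : (I₁ \ I₂).card = 1 := by
    by_contra hc
    have h2 : 2 ≤ (I₁ \ I₂).card := by
      have : 1 ≤ (I₁ \ I₂).card := Finset.card_pos.mpr ⟨a0, Finset.mem_sdiff.mpr ⟨ha01, ha02⟩⟩
      omega
    have h2' : 2 ≤ (I₂ \ I₁).card := hΔcard ▸ h2
    obtain ⟨m, hm, hmin⟩ := Finset.exists_min_image ((I₁ \ I₂) ∪ (I₂ \ I₁)) g
      ⟨a0, Finset.mem_union_left _ (Finset.mem_sdiff.mpr ⟨ha01, ha02⟩)⟩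
    rw [Finset.mem_union] at hm
    rcases hm with hm | hm
    · obtain ⟨b, hb, hlt⟩ := hstep h2 m hm
      exact absurd (hmin b (Finset.mem_union_right _ hb)) (not_le.mpr hlt)
    · obtain ⟨a, ha, hlt⟩ := hstep' h2' m hm
      exact absurd (hmin a (Finset.mem_union_left _ ha)) (not_le.mpr hlt)
  obtain ⟨a, hΔ1⟩ := Finset.card_eq_one.mp hone
  obtain ⟨b, hΔ2⟩ := Finset.card_eq_one.mp (hΔcard ▸ hone)
  have hmem1 : ∀ i : Fin n, (i ∈ I₁ ∧ i ∉ I₂) ↔ i = a := by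
    intro i
    rw [← Finset.mem_sdiff, hΔ1, Finset.mem_singleton]
  have hmem2 : ∀ i : Fin n, (i ∈ I₂ ∧ i ∉ I₁) ↔ i = b := by
    intro i
    rw [← Finset.mem_sdiff, hΔ2, Finset.mem_singleton]
  have ha1 : a ∈ I₁ ∧ a ∉ I₂ := (hmem1 a).mpr rfl
  have hb2 : b ∈ I₂ ∧ b ∉ I₁ := (hmem2 b).mpr rfl
  have hab : a ≠ b := fun h => ha1.2 (h ▸ hb2.1)
  refine ⟨a.castSucc, b.castSucc, 1, fun h => hab (Fin.castSucc_inj.mp h), ?_⟩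
  rw [one_smul, hveq, hweq]
  funext j
  induction j using Fin.lastCases with
  | last =>
    have h1 : (Fin.last n) ≠ a.castSucc := (Fin.castSucc_lt_last a).ne'
    have h2 : (Fin.last n) ≠ b.castSucc := (Fin.castSucc_lt_last b).ne'
    simp [pt_last, hcard, Pi.single_apply, h1, h2]
  | cast i =>
    have hia : (i.castSucc = a.castSucc) ↔ i = a := Fin.castSucc_inj
    have hib : (i.castSucc = b.castSucc) ↔ i = b := Fin.castSucc_inj
    simp only [Pi.sub_apply, pt_castSucc, Pi.single_apply, hia, hib]
    by_cases hi1 : i ∈ I₁ <;> by_cases hi2 : i ∈ I₂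
    · have hna : i ≠ a := fun h => ha1.2 (h ▸ hi2)
      have hnb : i ≠ b := fun h => hb2.2 (h ▸ hi1)
      simp [hi1, hi2, hna, hnb]
    · have hia' : i = a := (hmem1 i).mp ⟨hi1, hi2⟩
      subst hia'
      simp [hi1, hi2, hab]
    · have hib' : i = b := (hmem2 i).mp ⟨hi2, hi1⟩
      subst hib'
      simp [hi1, hi2, Ne.symm hab]
    · have hna : i ≠ a := fun h => hi1 (h ▸ ha1.1)
      have hnb : i ≠ b := fun h => hi2 (h ▸ hb2.1)
      simp [hi1, hi2, hna, hnb]
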